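/- Let (K, θ) be an existentially closed model of the theory T of algebraically closed fields equipped with a multiplicative map θ (θ(xy) = θ(x)θ(y), θ(1) = 1, θ(x) = 0 iff x = 0). Then θ : K^× → K^× is surjective. -/

import Mathlib

open FirstOrder

private lemma ratFunc_X_pow_eq_algebraMap {K : Type} [Field K] (m : ℕ) (c : K)
    (h : (RatFunc.X : RatFunc K) ^ m = algebraMap K (RatFunc K) c) : m = 0 := by
  have hinj := IsFractionRing.injective (Polynomial K) (RatFunc K)
  have h' : algebraMap (Polynomial K) (RatFunc K) (Polynomial.X ^ m) =
      algebraMap (Polynomial K) (RatFunc K) (Polynomial.C c) := by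
    rw [map_pow, RatFunc.algebraMap_X, RatFunc.algebraMap_C, h, RatFunc.algebraMap_eq_C]
  have h2 : (Polynomial.X : Polynomial K) ^ m = Polynomial.C c := hinj h'
  simpa using congrArg Polynomial.natDegree h2

private lemma ratFunc_X_zpow_eq_algebraMap {K : Type} [Field K] (n : ℤ) (c : K)
    (h : (RatFunc.X : RatFunc K) ^ n = algebraMap K (RatFunc K) c) : n = 0 := by
  rcases Int.natAbs_eq n with hn | hn
  · rw [hn, zpow_natCast] at h
    rw [hn, ratFunc_X_pow_eq_algebraMap _ _ h, Nat.cast_zero]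
  · rw [hn, zpow_neg, zpow_natCast, inv_eq_iff_eq_inv, ← map_inv₀] at h
    rw [hn, ratFunc_X_pow_eq_algebraMap _ _ h, Nat.cast_zero, neg_zero]
private lemma units_exists_zpow {L : Type} [Field L] [IsAlgClosed L] (u : Lˣ) (n : ℤ)
    (hn : n ≠ 0) : ∃ v : Lˣ, v ^ n = u := by
  obtain ⟨z, hz⟩ := IsAlgClosed.exists_pow_nat_eq (u : L) (Int.natAbs_pos.mpr hn)
  have hz0 : z ≠ 0 := by
    rintro rfl
    rw [zero_pow (Int.natAbs_ne_zero.mpr hn)] at hz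
    exact u.ne_zero hz.symm
  have hv : Units.mk0 z hz0 ^ n.natAbs = u := Units.ext (by simp [hz])
  rcases Int.natAbs_eq n with h | h
  · exact ⟨Units.mk0 z hz0, by rw [h, zpow_natCast, hv]⟩
  · exact ⟨(Units.mk0 z hz0)⁻¹, by rw [h, zpow_neg, zpow_natCast, inv_pow, inv_inv, hv]⟩

/-- The language of fields together with one extra unary function symbol `θ`:
two constants (`0`, `1`), two unary functions (`-`, `θ`), two binary functions (`+`, `*`). -/
def thetaFieldLang : FirstOrder.Language where
  Functions n :=
    match n with
    | 0 => Fin 2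
    | 1 => Fin 2
    | 2 => Fin 2
    | _ + 3 => Empty
  Relations _ := Empty

/-- The `thetaFieldLang`-structure on a field `K` equipped with a map `θ : K → K`. -/
def thetaFieldStr (K : Type*) [Field K] (θ : K → K) : thetaFieldLang.Structure K where
  funMap {n} f x :=
    match n, f, x with
    | 0, f, _ => if (show Fin 2 from f) = 0 then (0 : K) else 1
    | 1, f, x => if (show Fin 2 from f) = 0 then -x 0 else θ (x 0)
    | 2, f, x => if (show Fin 2 from f) = 0 then x 0 + x 1 else x 0 * x 1
    | _ + 3, f, _ => f.elim
  RelMap {_} r _ := r.elim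

/-- If `(K, θ)` is an existentially closed model of the theory `T` of algebraically closed
fields with a multiplicative map `θ`, then `θ : K^× → K^×` is surjective. -/
theorem theta_surjective_of_existentially_closed {K : Type} [Field K] [IsAlgClosed K]
    (θ : K → K)
    (hmul : ∀ x y : K, θ (x * y) = θ x * θ y) (hone : θ 1 = 1)
    (hzero : ∀ x : K, θ x = 0 ↔ x = 0)
    (hec : ∀ (L : Type) [Field L] [IsAlgClosed L] (θL : L → L) (f : K →+* L),
      (∀ x y : L, θL (x * y) = θL x * θL y) → θL 1 = 1 → (∀ x : L, θL x = 0 ↔ x = 0) →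
      (∀ x : K, θL (f x) = f (θ x)) →
      ∀ (m : ℕ) (φ : thetaFieldLang.Formula (K ⊕ Fin m)), φ.IsQF →
        (∃ xs : Fin m → L,
          letI := thetaFieldStr L θL
          φ.Realize (Sum.elim (⇑f) xs)) →
        ∃ xs : Fin m → K,
          letI := thetaFieldStr K θ
          φ.Realize (Sum.elim id xs)) :
    ∀ y : K, y ≠ 0 → ∃ x : K, θ x = y := by
  intro y hy
  classical
  set L := AlgebraicClosure (RatFunc K) with hL
  let f : K →+* L := (algebraMap (RatFunc K) L).comp (algebraMap K (RatFunc K))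
  have hfinj : Function.Injective f := f.injective
  let t : L := algebraMap (RatFunc K) L RatFunc.X
  have ht0 : t ≠ 0 := by
    simp only [t, map_ne_zero_iff _ (algebraMap (RatFunc K) L).injective]
    exact RatFunc.X_ne_zero
  let tu : Lˣ := Units.mk0 t ht0
  let yu : Lˣ := Units.mk0 (f y) ((map_ne_zero f).mpr hy)
  -- θ as a map on units
  have hθne : ∀ k : Kˣ, f (θ (k : K)) ≠ 0 := fun k => by
    rw [map_ne_zero f, Ne, hzero]; exact k.ne_zero
  let θu : Kˣ → Lˣ := fun k => Units.mk0 (f (θ (k : K))) (hθne k)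
  have hθu_mul : ∀ a b : Kˣ, θu (a * b) = θu a * θu b := fun a b =>
    Units.ext (by simp [θu, hmul, map_mul])
  let i : Additive Kˣ × ℤ →+ Additive Lˣ :=
    AddMonoidHom.mk' (fun p => Additive.ofMul (Units.map f.toMonoidHom p.1.toMul * tu ^ p.2))
      (by
        rintro ⟨a, m⟩ ⟨b, n⟩
        show Additive.ofMul _ = Additive.ofMul (_ * _)
        refine congrArg Additive.ofMul ?_
        show Units.map f.toMonoidHom ((a + b).toMul) * tu ^ (m + n) = _
        rw [toMul_add, map_mul, zpow_add, mul_mul_mul_comm]; rfl)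
  let g : Additive Kˣ × ℤ →+ Additive Lˣ :=
    AddMonoidHom.mk' (fun p => Additive.ofMul (θu p.1.toMul * yu ^ p.2))
      (by
        rintro ⟨a, m⟩ ⟨b, n⟩
        show Additive.ofMul _ = Additive.ofMul (_ * _)
        refine congrArg Additive.ofMul ?_
        show θu ((a + b).toMul) * yu ^ (m + n) = _
        rw [toMul_add, hθu_mul, zpow_add, mul_mul_mul_comm]; rfl)
  have hinj : Function.Injective i := by
    rw [injective_iff_map_eq_zero]
    rintro ⟨a, n⟩ ha
    have h1 : Units.map f.toMonoidHom a.toMul * tu ^ n = 1 := Additive.ofMul.injective ha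
    have h2 : f (a.toMul : K) * t ^ n = 1 := by
      have := congrArg Units.val h1
      simpa [Units.val_zpow_eq_zpow_val, tu] using this
    have h3 : algebraMap (RatFunc K) L (algebraMap K (RatFunc K) (a.toMul : K) * RatFunc.X ^ n)
        = algebraMap (RatFunc K) L 1 := by
      rw [map_mul, map_zpow₀, map_one]
      exact h2
    have h4 : algebraMap K (RatFunc K) (a.toMul : K) * RatFunc.X ^ n = 1 :=
      (algebraMap (RatFunc K) L).injective h3
    have h5 : (RatFunc.X : RatFunc K) ^ n = algebraMap K (RatFunc K) ((a.toMul : K)⁻¹) := by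
      rw [map_inv₀]
      exact eq_inv_of_mul_eq_one_left (by rw [mul_comm]; exact h4)
    have hn0 : n = 0 := ratFunc_X_zpow_eq_algebraMap _ _ h5
    subst hn0
    rw [zpow_zero, mul_one] at h4
    have ha1 : (a.toMul : K) = 1 :=
      (algebraMap K (RatFunc K)).injective (by rw [h4, map_one])
    have : a = 0 := by
      have : a.toMul = 1 := Units.ext ha1
      exact this
    simp [this]
  letI : DivisibleBy (Additive Lˣ) ℤ :=
    { div := fun a n =>
        if h : n = 0 then 0 else Additive.ofMul (units_exists_zpow a.toMul n h).choose
      div_zero := fun a => dif_pos rfl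
      div_cancel := fun {n} a hn => by
        beta_reduce
        rw [dif_neg hn]
        show Additive.ofMul ((units_exists_zpow a.toMul n hn).choose ^ n) = a
        rw [(units_exists_zpow a.toMul n hn).choose_spec]; rfl }
  obtain ⟨Θ, hΘ⟩ :=
    (Module.Baer.of_divisible (Additive Lˣ)).extension_property_addMonoidHom i hinj g
  have hΘ' : ∀ (k : Kˣ) (n : ℤ),
      Θ (Additive.ofMul (Units.map f.toMonoidHom k * tu ^ n)) = Additive.ofMul (θu k * yu ^ n) :=
    fun k n => DFunLike.congr_fun hΘ (Additive.ofMul k, n)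
  let θL : L → L := fun x => if h : x = 0 then 0 else ((Θ (Additive.ofMul (Units.mk0 x h))).toMul : L)
  have θLzero : ∀ x : L, θL x = 0 ↔ x = 0 := by
    intro x
    by_cases h : x = 0
    · simp [θL, h]
    · simp only [θL, dif_neg h]
      exact iff_of_false (Units.ne_zero _) h
  have θLmul : ∀ x z : L, θL (x * z) = θL x * θL z := by
    intro x z
    by_cases hx : x = 0
    · simp [θL, hx]
    by_cases hz : z = 0
    · simp [θL, hz]
    have hxz : x * z ≠ 0 := mul_ne_zero hx hz
    simp only [θL, dif_neg hx, dif_neg hz, dif_neg hxz]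
    have : Units.mk0 (x * z) hxz = Units.mk0 x hx * Units.mk0 z hz := Units.ext rfl
    rw [this]
    show ((Θ (Additive.ofMul (Units.mk0 x hx) + Additive.ofMul (Units.mk0 z hz))).toMul : L) = _
    rw [map_add]
    rfl
  have θLone : θL 1 = 1 := by
    have h1 : (1 : L) ≠ 0 := one_ne_zero
    simp only [θL, dif_neg h1]
    have : Units.mk0 (1 : L) h1 = 1 := Units.ext rfl
    rw [this]
    show ((Θ (0 : Additive Lˣ)).toMul : L) = 1
    rw [map_zero]
    rfl
  have θLcompat : ∀ x : K, θL (f x) = f (θ x) := by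
    intro x
    by_cases hx : x = 0
    · simp [θL, hx, (hzero 0).mpr rfl]
    have hfx : f x ≠ 0 := (map_ne_zero f).mpr hx
    simp only [θL, dif_neg hfx]
    have : Units.mk0 (f x) hfx = Units.map f.toMonoidHom (Units.mk0 x hx) * tu ^ (0 : ℤ) := by
      ext; simp
    rw [this, hΘ' (Units.mk0 x hx) 0]
    show (θu (Units.mk0 x hx) * yu ^ (0:ℤ) : Lˣ).val = f (θ x)
    simp [θu]
  have θLt : θL t = f y := by
    simp only [θL, dif_neg ht0]
    have : Units.mk0 t ht0 = Units.map f.toMonoidHom (1 : Kˣ) * tu ^ (1 : ℤ) := by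
      ext; simp [tu]
    rw [this, hΘ' 1 1]
    show (θu 1 * yu ^ (1:ℤ) : Lˣ).val = f y
    have : θu 1 = 1 := Units.ext (by simp [θu, hone])
    simp [this, yu]
  let fsym : thetaFieldLang.Functions 1 := (1 : Fin 2)
  let φ : thetaFieldLang.Formula (K ⊕ Fin 1) :=
    Language.Term.equal
      (Language.Term.func fsym ![Language.Term.var (Sum.inr 0)])
      (Language.Term.var (Sum.inl y))
  have hqf : φ.IsQF :=
    Language.BoundedFormula.IsAtomic.isQF (Language.BoundedFormula.IsAtomic.equal _ _)
  have hrealL : ∃ xs : Fin 1 → L,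
      letI := thetaFieldStr L θL
      φ.Realize (Sum.elim (⇑f) xs) := by
    letI := thetaFieldStr L θL
    refine ⟨![t], ?_⟩
    rw [Language.Formula.realize_equal]
    show Language.Structure.funMap fsym _ = _
    show θL (Language.Term.realize _ (Language.Term.var (Sum.inr 0))) = _
    show θL t = f y
    exact θLt
  obtain ⟨xs, hxs⟩ := hec L θL f θLmul θLone θLzero θLcompat 1 φ hqf hrealL
  refine ⟨xs 0, ?_⟩
  letI := thetaFieldStr K θ
  rw [Language.Formula.realize_equal] at hxs
  exact hxs
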